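/- arXiv:2509.25688 — 3 statements merged into one kernel-verified Lean document; each statement's English description precedes it below -/
import Mathlib

section
/- Fix μ_h ∈ ℝ and σ_h > 0, σ_c > 0. For t ∈ ℝ, let X_t and Y be independent real-valued random variables with X_t ~ N(μ_h + t, σ_c²) and Y ~ N(μ_h, σ_h²). Then P((X_t − μ_h)² ≥ (Y − μ_h)²) → 1 as |t| → ∞; that is, for every ε > 0 there exists M > 0 such that for all t with |t| ≥ M, P((X_t − μ_h)² ≥ (Y − μ_h)²) > 1 − ε. -/
open MeasureTheory ProbabilityTheory
open scoped ENNReal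

/-- Tail of a finite measure on `ℝ` around a point can be made small. -/
lemma tail_small (m : Measure ℝ) [IsFiniteMeasure m] (a : ℝ) {ε : ℝ≥0∞} (hε : 0 < ε) :
    ∃ n : ℕ, m {x | (n : ℝ) < |x - a|} < ε := by
  have hmeas : ∀ n : ℕ, MeasurableSet {x : ℝ | (n : ℝ) < |x - a|} := fun n =>
    measurableSet_lt measurable_const ((measurable_id.sub measurable_const).abs)
  have hanti : Antitone (fun n : ℕ => {x : ℝ | (n : ℝ) < |x - a|}) := by
    intro i j hij x hx
    exact lt_of_le_of_lt (show (i:ℝ) ≤ (j:ℝ) from Nat.cast_le.mpr hij) hx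
  have hInt : (⋂ n : ℕ, {x : ℝ | (n : ℝ) < |x - a|}) = ∅ := by
    ext x
    simp only [Set.mem_iInter, Set.mem_setOf_eq, Set.mem_empty_iff_false, iff_false, not_forall,
      not_lt]
    exact ⟨⌈|x - a|⌉₊, Nat.le_ceil _⟩
  have := tendsto_measure_iInter_atTop (μ := m)
    (fun n => (hmeas n).nullMeasurableSet) hanti ⟨0, measure_ne_top m _⟩
  rw [hInt, measure_empty] at this
  rcases (this.eventually (gt_mem_nhds hε)).exists with ⟨n, hn⟩
  exact ⟨n, hn⟩

/-- Theorem 1 (mean-incongruence case): with `X t ~ N(μh + t, σc²)` and `Y ~ N(μh, σh²)`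
independent for each `t`, `P((X t − μh)² ≥ (Y − μh)²) → 1` as `|t| → ∞`. -/
theorem stmt_3
    {Ω : Type*} [MeasurableSpace Ω] (P : Measure Ω) [IsProbabilityMeasure P]
    (μh σh σc : ℝ) (hσh : 0 < σh) (hσc : 0 < σc)
    (X : ℝ → Ω → ℝ) (Y : Ω → ℝ)
    (hX : ∀ t, Measurable (X t)) (hY : Measurable Y)
    (hind : ∀ t, IndepFun (X t) Y P)
    (hXd : ∀ t, P.map (X t) = gaussianReal (μh + t) (Real.toNNReal (σc ^ 2)))
    (hYd : P.map Y = gaussianReal μh (Real.toNNReal (σh ^ 2))) :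
    ∀ ε : ℝ≥0∞, 0 < ε → ∃ M : ℝ, 0 < M ∧ ∀ t : ℝ, M ≤ |t| →
      1 - ε < P {ω | (Y ω - μh) ^ 2 ≤ (X t ω - μh) ^ 2} := by
  intro ε hε
  set δ : ℝ≥0∞ := min ε 1 with hδdef
  have hδpos : 0 < δ := lt_min hε zero_lt_one
  have hδle1 : δ ≤ 1 := min_le_right _ _
  have hδne : δ ≠ ∞ := ne_top_of_le_ne_top ENNReal.one_ne_top hδle1
  have hδ2 : 0 < δ / 2 := ENNReal.half_pos hδpos.ne'
  -- choose c for the Y tail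
  obtain ⟨nc, hnc⟩ := tail_small (gaussianReal μh (Real.toNNReal (σh ^ 2))) μh hδ2
  set c : ℝ := (nc : ℝ) with hcdef
  -- choose m0 for the standard (centered) X tail
  obtain ⟨m0, hm0⟩ := tail_small (gaussianReal 0 (Real.toNNReal (σc ^ 2))) 0 hδ2
  refine ⟨(m0 : ℝ) + c + 1, by positivity, fun t ht => ?_⟩
  -- the bad events
  set Bc : Set Ω := {ω | c < |Y ω - μh|} with hBc
  set Ac : Set Ω := {ω | |X t ω - μh| < c} with hAc
  -- measure of Bc
  have hBmeas : MeasurableSet {y : ℝ | c < |y - μh|} :=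
    measurableSet_lt measurable_const ((measurable_id.sub measurable_const).abs)
  have hPB : P Bc < δ / 2 := by
    have : P Bc = (P.map Y) {y : ℝ | c < |y - μh|} := by
      rw [Measure.map_apply hY hBmeas]; rfl
    rw [this, hYd]; exact hnc
  -- measure of Ac
  have hAmeas : MeasurableSet {x : ℝ | |x - μh| < c} :=
    measurableSet_lt ((measurable_id.sub measurable_const).abs) measurable_const
  have hPA : P Ac < δ / 2 := by
    have h1 : P Ac = (P.map (X t)) {x : ℝ | |x - μh| < c} := by
      rw [Measure.map_apply (hX t) hAmeas]; rfl
    have h2 : (gaussianReal (μh + t) (Real.toNNReal (σc ^ 2)))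
        = (gaussianReal 0 (Real.toNNReal (σc ^ 2))).map (· + (μh + t)) := by
      rw [gaussianReal_map_add_const, zero_add]
    have h3 : (P.map (X t)) {x : ℝ | |x - μh| < c}
        = (gaussianReal 0 (Real.toNNReal (σc ^ 2))) ((· + (μh + t)) ⁻¹' {x : ℝ | |x - μh| < c}) := by
      rw [hXd t, h2, Measure.map_apply (measurable_add_const _) hAmeas]
    have hsub : ((· + (μh + t)) ⁻¹' {x : ℝ | |x - μh| < c}) ⊆ {z : ℝ | (m0 : ℝ) < |z - 0|} := by
      intro z hz
      simp only [Set.mem_preimage, Set.mem_setOf_eq] at hz ⊢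
      have hz' : |z + t| < c := by
        have : z + (μh + t) - μh = z + t := by ring
        rwa [this] at hz
      have h4 : |t| - |z + t| ≤ |z| := by
        have := abs_sub_abs_le_abs_sub t (z + t)
        have h5 : |t - (z + t)| = |z| := by rw [show t - (z + t) = -z by ring, abs_neg]
        linarith
      have : (m0 : ℝ) + 1 ≤ |z| + c := by
        have : (m0 : ℝ) + c + 1 ≤ |t| := ht
        linarith
      rw [sub_zero]
      linarith
    calc P Ac = _ := h1.trans h3
      _ ≤ (gaussianReal 0 (Real.toNNReal (σc ^ 2))) {z : ℝ | (m0 : ℝ) < |z - 0|} :=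
          measure_mono hsub
      _ < δ / 2 := hm0
  -- combine
  set T : Set Ω := {ω | (Y ω - μh) ^ 2 ≤ (X t ω - μh) ^ 2} with hT
  have hcover : (Set.univ : Set Ω) ⊆ T ∪ (Ac ∪ Bc) := by
    intro ω _
    by_cases h1 : ω ∈ Ac
    · exact Or.inr (Or.inl h1)
    by_cases h2 : ω ∈ Bc
    · exact Or.inr (Or.inr h2)
    left
    simp only [hAc, Set.mem_setOf_eq, not_lt] at h1
    simp only [hBc, Set.mem_setOf_eq, not_lt] at h2
    have : |Y ω - μh| ≤ |X t ω - μh| := h2.trans h1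
    have := mul_self_le_mul_self (abs_nonneg _) this
    simpa [hT, Set.mem_setOf_eq, ← sq_abs (Y ω - μh), ← sq_abs (X t ω - μh), sq] using this
  have hsum : (1 : ℝ≥0∞) ≤ P T + (P Ac + P Bc) := by
    calc (1 : ℝ≥0∞) = P Set.univ := (measure_univ (μ := P)).symm
      _ ≤ P (T ∪ (Ac ∪ Bc)) := measure_mono hcover
      _ ≤ P T + P (Ac ∪ Bc) := measure_union_le _ _
      _ ≤ P T + (P Ac + P Bc) := by gcongr; exact measure_union_le _ _
  have hlt : (1 : ℝ≥0∞) < P T + δ := by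
    have hPT : P T ≠ ∞ := (measure_lt_top P T).ne
    have h6 : P Ac + P Bc < δ := by
      calc P Ac + P Bc < δ / 2 + δ / 2 := ENNReal.add_lt_add hPA hPB
        _ = δ := ENNReal.add_halves δ
    calc (1 : ℝ≥0∞) ≤ P T + (P Ac + P Bc) := hsum
      _ < P T + δ := ENNReal.add_lt_add_left hPT h6
  have : (1 : ℝ≥0∞) - δ < P T := by
    rw [ENNReal.sub_lt_iff_lt_right hδne hδle1]
    exact hlt
  exact lt_of_le_of_lt (tsub_le_tsub_left (min_le_left ε 1) 1) this
end

section
/- Fix μ_c, μ_h ∈ ℝ and σ_h > 0. For σ_c > 0, let X and Y be independent real-valued random variables with X ~ N(μ_c, σ_c²) and Y ~ N(μ_h, σ_h²). Then P((X − μ_h)² ≥ (Y − μ_h)²) → 1 as σ_c → ∞; that is, for every ε > 0 there exists M > 0 such that for all σ_c ≥ M, P((X − μ_h)² ≥ (Y − μ_h)²) > 1 − ε. -/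
open MeasureTheory ProbabilityTheory
open scoped ENNReal NNReal

lemma gauss_interval_bound (μ : ℝ) {v : ℝ≥0} (hv : v ≠ 0) (a b : ℝ) :
    gaussianReal μ v (Set.Ioo a b)
      ≤ ENNReal.ofReal ((Real.sqrt (2 * Real.pi * v))⁻¹ * (b - a)) := by
  rw [gaussianReal_apply μ hv]
  have hb : ∀ x, gaussianPDF μ v x ≤ ENNReal.ofReal ((Real.sqrt (2 * Real.pi * v))⁻¹) := by
    intro x
    refine ENNReal.ofReal_le_ofReal ?_
    rw [gaussianPDFReal_def]
    have h1 : Real.exp (-(x - μ)^2 / (2 * v)) ≤ 1 := by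
      rw [Real.exp_le_one_iff]
      apply div_nonpos_of_nonpos_of_nonneg
      · simp [sq_nonneg]
      · positivity
    calc (Real.sqrt (2 * Real.pi * v))⁻¹ * Real.exp (-(x - μ)^2 / (2 * v))
        ≤ (Real.sqrt (2 * Real.pi * v))⁻¹ * 1 :=
          mul_le_mul_of_nonneg_left h1 (by positivity)
      _ = _ := mul_one _
  calc ∫⁻ x in Set.Ioo a b, gaussianPDF μ v x
      ≤ ∫⁻ _ in Set.Ioo a b, ENNReal.ofReal ((Real.sqrt (2 * Real.pi * v))⁻¹) :=
        lintegral_mono fun x => hb x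
    _ = ENNReal.ofReal ((Real.sqrt (2 * Real.pi * v))⁻¹) * volume (Set.Ioo a b) := by
        rw [setLIntegral_const]
    _ = ENNReal.ofReal ((Real.sqrt (2 * Real.pi * v))⁻¹) * ENNReal.ofReal (b - a) := by
        rw [Real.volume_Ioo]
    _ = _ := by rw [← ENNReal.ofReal_mul (by positivity)]

/-- Theorem 1 (variance-incongruence case, `σc → ∞`): with `X s ~ N(μc, s²)` (the current
data with standard deviation `s`) and `Y ~ N(μh, σh²)` independent for each `s > 0`,
`P((X s − μh)² ≥ (Y − μh)²) → 1` as `s → ∞`. -/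
theorem stmt_4
    {Ω : Type*} [MeasurableSpace Ω] (P : Measure Ω) [IsProbabilityMeasure P]
    (μc μh σh : ℝ) (hσh : 0 < σh)
    (X : ℝ → Ω → ℝ) (Y : Ω → ℝ)
    (hX : ∀ s, 0 < s → Measurable (X s)) (hY : Measurable Y)
    (hind : ∀ s, 0 < s → IndepFun (X s) Y P)
    (hXd : ∀ s, 0 < s → P.map (X s) = gaussianReal μc (Real.toNNReal (s ^ 2)))
    (hYd : P.map Y = gaussianReal μh (Real.toNNReal (σh ^ 2))) :
    ∀ ε : ℝ≥0∞, 0 < ε → ∃ M : ℝ, 0 < M ∧ ∀ s : ℝ, M ≤ s →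
      1 - ε < P {ω | (Y ω - μh) ^ 2 ≤ (X s ω - μh) ^ 2} := by
  intro ε hε
  -- reduce to ε' := min ε 1
  set ε' : ℝ≥0∞ := min ε 1 with hε'def
  have hε'pos : 0 < ε' := lt_min hε zero_lt_one
  have hε'le : ε' ≤ 1 := min_le_right _ _
  have hε'top : ε' ≠ ⊤ := (lt_of_le_of_lt hε'le (by norm_num)).ne
  set η : ℝ≥0∞ := ε' / 3 with hηdef
  have hη0 : η ≠ 0 := by
    simp [hηdef, ENNReal.div_eq_zero_iff, hε'pos.ne']
  have hηtop : η ≠ ⊤ := by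
    simp [hηdef, ENNReal.div_eq_top, hε'top]
  have h3η : η + η < ε' := by
    have h1 : η + η < η + η + η :=
      ENNReal.lt_add_right (by simp [ENNReal.add_eq_top, hηtop]) hη0
    have h2 : η + η + η = ε' := by
      have h3 : η + η + η = ε' / 3 * 3 := by rw [hηdef]; ring
      rw [h3, ENNReal.div_mul_cancel (by norm_num) (by norm_num)]
    rw [h2] at h1; exact h1
  -- Step 1: choose K with P {K < |Y - μh|} < η
  have hstep1 : ∃ K : ℝ, 0 ≤ K ∧ P {ω | K < |Y ω - μh|} < η := by
    set C : ℕ → Set Ω := fun n => {ω | (n : ℝ) < |Y ω - μh|} with hC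
    have hCm : ∀ n, MeasurableSet (C n) := fun n =>
      measurableSet_lt measurable_const ((hY.sub measurable_const).abs)
    have hanti : Antitone C := by
      intro m n hmn ω hω
      exact lt_of_le_of_lt ((Nat.cast_le (α := ℝ)).mpr hmn) hω
    have hiInter : ⋂ n, C n = ∅ := by
      ext ω
      simp only [Set.mem_iInter, Set.mem_empty_iff_false, iff_false, not_forall, hC,
        Set.mem_setOf_eq, not_lt]
      exact exists_nat_ge (|Y ω - μh|)
    have htend : Filter.Tendsto (fun n => P (C n)) Filter.atTop (nhds 0) := by
      have h := tendsto_measure_iInter_atTop (μ := P) (fun n => (hCm n).nullMeasurableSet)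
        hanti ⟨0, measure_ne_top _ _⟩
      rw [hiInter] at h
      simpa [Function.comp_def] using h
    obtain ⟨n, hn⟩ := (htend.eventually_lt_const (pos_iff_ne_zero.mpr hη0)).exists
    exact ⟨(n : ℝ), Nat.cast_nonneg n, hn⟩
  obtain ⟨K, hK0, hKP⟩ := hstep1
  -- Step 2: choose M
  set δ : ℝ := η.toReal with hδdef
  have hδ0 : 0 < δ := ENNReal.toReal_pos hη0 hηtop
  set M : ℝ := max 1 (2 * K / (δ * Real.sqrt (2 * Real.pi)) + 1) with hM
  refine ⟨M, lt_of_lt_of_le zero_lt_one (le_max_left _ _), ?_⟩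
  intro s hs
  have hs1 : (1 : ℝ) ≤ s := le_trans (le_max_left _ _) hs
  have hspos : 0 < s := lt_of_lt_of_le zero_lt_one hs1
  set A : Set Ω := {ω | K ≤ |X s ω - μh|} with hA
  set B : Set Ω := {ω | |Y ω - μh| ≤ K} with hB
  have hAm : MeasurableSet A :=
    measurableSet_le measurable_const (((hX s hspos).sub measurable_const).abs)
  have hBm : MeasurableSet B :=
    measurableSet_le ((hY.sub measurable_const).abs) measurable_const
  have hv : Real.toNNReal (s ^ 2) ≠ 0 := by
    simp [Real.toNNReal_eq_zero, not_le, pow_pos hspos, hspos.ne']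
  -- P Aᶜ < η
  have hAc : P Aᶜ < η := by
    have hset : Aᶜ = X s ⁻¹' (Set.Ioo (μh - K) (μh + K)) := by
      ext ω
      simp only [hA, Set.mem_compl_iff, Set.mem_setOf_eq, not_le, Set.mem_preimage,
        Set.mem_Ioo, abs_lt]
      constructor
      · intro h; constructor <;> linarith [h.1, h.2]
      · intro h; constructor <;> linarith [h.1, h.2]
    rw [hset, ← Measure.map_apply (hX s hspos) measurableSet_Ioo, hXd s hspos]
    have hbound := gauss_interval_bound μc hv (μh - K) (μh + K)
    have hsqrt : Real.sqrt (2 * Real.pi * ((Real.toNNReal (s ^ 2)) : ℝ))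
        = s * Real.sqrt (2 * Real.pi) := by
      rw [Real.coe_toNNReal _ (sq_nonneg s), Real.sqrt_mul (by positivity),
        Real.sqrt_sq hspos.le, mul_comm]
    have hreal : (Real.sqrt (2 * Real.pi * ((Real.toNNReal (s ^ 2)) : ℝ)))⁻¹
        * ((μh + K) - (μh - K)) < δ := by
      rw [hsqrt]
      have h2K : (μh + K) - (μh - K) = 2 * K := by ring
      rw [h2K, inv_mul_lt_iff₀ (by positivity)]
      have hsge : 2 * K / (δ * Real.sqrt (2 * Real.pi)) + 1 ≤ s :=
        le_trans (le_max_right _ _) hs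
      have h1 : 2 * K / (δ * Real.sqrt (2 * Real.pi)) ≤ s - 1 := by linarith
      have h2 : 2 * K ≤ (s - 1) * (δ * Real.sqrt (2 * Real.pi)) :=
        (div_le_iff₀ (by positivity)).mp h1
      have hsqpos : 0 < Real.sqrt (2 * Real.pi) := by positivity
      nlinarith
    calc gaussianReal μc (Real.toNNReal (s ^ 2)) (Set.Ioo (μh - K) (μh + K))
        ≤ ENNReal.ofReal _ := hbound
      _ < ENNReal.ofReal δ := (ENNReal.ofReal_lt_ofReal_iff hδ0).mpr hreal
      _ = η := by rw [hδdef, ENNReal.ofReal_toReal hηtop]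
  -- combine
  have hsub : A ∩ B ⊆ {ω | (Y ω - μh) ^ 2 ≤ (X s ω - μh) ^ 2} := by
    rintro ω ⟨hωA, hωB⟩
    have h : |Y ω - μh| ≤ |X s ω - μh| := le_trans hωB hωA
    calc (Y ω - μh) ^ 2 = |Y ω - μh| ^ 2 := (sq_abs _).symm
      _ ≤ |X s ω - μh| ^ 2 := pow_le_pow_left₀ (abs_nonneg _) h 2
      _ = (X s ω - μh) ^ 2 := sq_abs _
  have hcompl : P ((A ∩ B)ᶜ) < ε' := by
    rw [Set.compl_inter]
    calc P (Aᶜ ∪ Bᶜ) ≤ P Aᶜ + P Bᶜ := measure_union_le _ _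
      _ < η + η := by
          refine ENNReal.add_lt_add hAc ?_
          have : Bᶜ = {ω | K < |Y ω - μh|} := by
            ext ω; simp [hB, not_le]
          rw [this]; exact hKP
      _ < ε' := h3η
  have hPAB : 1 - ε' < P (A ∩ B) := by
    have hle : P ((A ∩ B)ᶜ) ≤ 1 := prob_le_one
    have hPeq : P (A ∩ B) = 1 - P ((A ∩ B)ᶜ) := by
      rw [prob_compl_eq_one_sub (hAm.inter hBm),
        ENNReal.sub_sub_cancel (by norm_num) prob_le_one]
    rw [hPeq, ENNReal.sub_lt_iff_lt_right hε'top hε'le]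
    calc (1 : ℝ≥0∞) = (1 - P ((A ∩ B)ᶜ)) + P ((A ∩ B)ᶜ) := (tsub_add_cancel_of_le hle).symm
      _ < (1 - P ((A ∩ B)ᶜ)) + ε' := ENNReal.add_lt_add_left (by
          exact ne_top_of_le_ne_top (by norm_num) (tsub_le_self.trans le_rfl)) hcompl
  calc 1 - ε ≤ 1 - ε' := tsub_le_tsub_left (min_le_left _ _) 1
    _ < P (A ∩ B) := hPAB
    _ ≤ P _ := measure_mono hsub
end

section
/- Let α_C, α_IC ∈ (0, 1) with α_IC < α_C, and fix g₂ = 1/4. For g₁ ∈ (0, 1/4), define b(g₁) = log( ((1 − α_C)·α_IC) / ((1 − α_IC)·α_C) ) / (log g₁ − log(1/4)) and a(g₁) = log((1 − α_C)/α_C) − b(g₁)·log g₁. Then a(g₁) + b(g₁)·log(1/2) → log((1 − α_IC)/α_IC) as g₁ → 0⁺, and consequently 1/(1 + exp(a(g₁) + b(g₁)·log(1/2))) → α_IC as g₁ → 0⁺. -/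
open Filter Real

/-- Borrowing Consistency (incongruent part of the proof of Theorem 2): with `g₂ = 1/4`
fixed and `a(g₁), b(g₁)` the calibrated sigmoid parameters for `g₁ ∈ (0, 1/4)`, as
`g₁ → 0⁺` we have `a(g₁) + b(g₁)·log(1/2) → log((1 − α_IC)/α_IC)`, and consequently the
sigmoid evaluated at `s = 1/2` converges to `α_IC`. -/
theorem stmt_15
    (αC αIC : ℝ) (hαC : αC ∈ Set.Ioo (0 : ℝ) 1) (hαIC : αIC ∈ Set.Ioo (0 : ℝ) 1)
    (hlt : αIC < αC) (a b : ℝ → ℝ)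
    (hb : ∀ g₁ ∈ Set.Ioo (0 : ℝ) (1 / 4),
        b g₁ = Real.log (((1 - αC) * αIC) / ((1 - αIC) * αC))
              / (Real.log g₁ - Real.log (1 / 4)))
    (ha : ∀ g₁ ∈ Set.Ioo (0 : ℝ) (1 / 4),
        a g₁ = Real.log ((1 - αC) / αC) - b g₁ * Real.log g₁) :
    Filter.Tendsto (fun g₁ => a g₁ + b g₁ * Real.log (1 / 2))
        (nhdsWithin 0 (Set.Ioo (0 : ℝ) (1 / 4)))
        (nhds (Real.log ((1 - αIC) / αIC)))
      ∧ Filter.Tendsto (fun g₁ => 1 / (1 + Real.exp (a g₁ + b g₁ * Real.log (1 / 2))))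
        (nhdsWithin 0 (Set.Ioo (0 : ℝ) (1 / 4)))
        (nhds αIC) := by
  obtain ⟨hC0, hC1⟩ := hαC
  obtain ⟨hIC0, hIC1⟩ := hαIC
  have h1C : (0:ℝ) < 1 - αC := by linarith
  have h1IC : (0:ℝ) < 1 - αIC := by linarith
  set L : ℝ := Real.log (((1 - αC) * αIC) / ((1 - αIC) * αC)) with hL
  have hlog : Tendsto Real.log (nhdsWithin (0:ℝ) (Set.Ioo 0 (1/4))) atBot :=
    Real.tendsto_log_nhdsGT_zero.mono_left
      (nhdsWithin_mono 0 Set.Ioo_subset_Ioi_self)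
  have hratio : Tendsto (fun g₁ : ℝ =>
      Real.log ((1 - αC) / αC)
        + L * (-1 + -(Real.log 2 * (Real.log (1/4) - Real.log g₁)⁻¹)))
      (nhdsWithin (0:ℝ) (Set.Ioo 0 (1/4)))
      (nhds (Real.log ((1 - αC) / αC) + L * (-1 + -(Real.log 2 * 0)))) := by
    refine Tendsto.const_add _ (Tendsto.const_mul _ (Tendsto.const_add _ (Tendsto.neg ?_)))
    refine Tendsto.const_mul _ ?_
    have h1 : Tendsto (fun x : ℝ => Real.log (1/4) - x) atBot atTop := by
      simpa [sub_eq_add_neg] using tendsto_atTop_add_const_left atBot (Real.log (1/4)) tendsto_neg_atBot_atTop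
    exact (h1.inv_tendsto_atTop).comp hlog
  have hval : Real.log ((1 - αC) / αC) + L * (-1 + -(Real.log 2 * 0))
      = Real.log ((1 - αIC) / αIC) := by
    rw [hL, Real.log_div h1C.ne' hC0.ne', Real.log_div h1IC.ne' hIC0.ne',
      Real.log_div (by positivity) (by positivity),
      Real.log_mul h1C.ne' hIC0.ne', Real.log_mul h1IC.ne' hC0.ne']
    ring
  have key : Tendsto (fun g₁ => a g₁ + b g₁ * Real.log (1 / 2))
      (nhdsWithin (0:ℝ) (Set.Ioo 0 (1/4))) (nhds (Real.log ((1 - αIC) / αIC))) := by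
    rw [← hval]
    refine Tendsto.congr' ?_ hratio
    filter_upwards [self_mem_nhdsWithin] with g₁ hg
    have hbg := hb g₁ hg
    have hag := ha g₁ hg
    have hlt' : Real.log g₁ < Real.log (1/4) := Real.log_lt_log hg.1 hg.2
    have hne : Real.log (1/4) - Real.log g₁ ≠ 0 := by linarith
    have hne' : Real.log g₁ - Real.log (1/4) ≠ 0 := by
      intro h; apply hne; linarith
    have hhalf : Real.log (1/2 : ℝ) = Real.log (1/4 : ℝ) + Real.log 2 := by
      rw [← Real.log_mul (by norm_num) (by norm_num)]; norm_num
    rw [hag, hbg, hhalf]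
    field_simp
    ring
  refine ⟨key, ?_⟩
  have hx : Real.exp (Real.log ((1 - αIC) / αIC)) = (1 - αIC) / αIC :=
    Real.exp_log (by positivity)
  have hne : (1 : ℝ) + Real.exp (Real.log ((1 - αIC) / αIC)) ≠ 0 := by
    rw [hx]
    have : (1:ℝ) + (1 - αIC) / αIC = 1 / αIC := by field_simp; ring
    rw [this]; positivity
  have hcont : Tendsto (fun t : ℝ => 1 / (1 + Real.exp t))
      (nhds (Real.log ((1 - αIC) / αIC)))
      (nhds (1 / (1 + Real.exp (Real.log ((1 - αIC) / αIC))))) :=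
    (continuousAt_const.div (continuousAt_const.add Real.continuous_exp.continuousAt) hne)
  have hval2 : (1:ℝ) / (1 + Real.exp (Real.log ((1 - αIC) / αIC))) = αIC := by
    rw [hx]; field_simp; ring
  rw [hval2] at hcont
  exact hcont.comp key
end
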